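/- Let r ∈ [1 - 1/√3, 1/2), ℓ := 2 arctan(√(4(1-r)² - 1)), and define for h ∈ [0, ℓ]: a(h) := 2 arcsin((1-r) sin h), b(h) := h + (ℓ - a(h))/2, and F(h) := (1-r)² sin h cos h + (a(h) - sin a(h))/2 + (1-r)(cos(a(h)/2) - (1-r) cos h)·sin(h + ℓ) + b(h) - sin b(h). Then F''(h) < 0 for all h ∈ (0, ℓ]; in particular F is strictly concave on [0, ℓ]. -/

import Mathlib

open Real

private lemma key_ineq (x u : ℝ) (hx1 : 1/4 ≤ x) (hx2 : x ≤ 1/3) (hu1 : 0 ≤ u) (hu2 : u ≤ 3/4) :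
    (x^2*u*(1-u) + (1+3*x-5*x*u)*(1-x*u))^2 < 16*x*(1-u)*(1-x*u)^3 := by
  obtain ⟨a, ha, rfl⟩ : ∃ a, 0 ≤ a ∧ x = 1/4 + a := ⟨x - 1/4, by linarith, by ring⟩
  obtain ⟨v, hv, rfl⟩ : ∃ v, 0 ≤ v ∧ u = 3/4 - v := ⟨3/4 - u, by linarith, by ring⟩
  have ha2 : a ≤ 1/12 := by linarith
  have hv2 : v ≤ 3/4 := by linarith
  nlinarith [mul_nonneg (mul_nonneg ha ha) (sub_nonneg.2 ha2), mul_nonneg (mul_nonneg ha ha) hv,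
    mul_nonneg (mul_nonneg (mul_nonneg ha ha) ha) hv, mul_nonneg (mul_nonneg ha hv) (sub_nonneg.2 hv2),
    mul_nonneg (mul_nonneg ha ha) (sub_nonneg.2 hv2), sq_nonneg (a*v), sq_nonneg (a*a),
    mul_nonneg (mul_nonneg (mul_nonneg ha ha) hv) hv, mul_nonneg ha hv]

private lemma R_nonneg (x u : ℝ) (hx1 : 1/4 ≤ x) (hx2 : x ≤ 1/3) (hu0 : 0 ≤ u) (hu : u ≤ 3/4) :
    0 ≤ x^2*u*(1-u) + (1+3*x-5*x*u)*(1-x*u) := by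
  have h1 : 0 ≤ x^2*u*(1-u) := by
    apply mul_nonneg (mul_nonneg (sq_nonneg x) hu0); linarith
  have h2 : 0 ≤ 1+3*x-5*x*u := by nlinarith [mul_le_mul_of_nonneg_left hu (by linarith : (0:ℝ) ≤ 5*x)]
  have h3 : 0 ≤ 1-x*u := by nlinarith [mul_le_mul_of_nonneg_left hu (by linarith : (0:ℝ) ≤ x)]
  nlinarith [mul_nonneg h2 h3]

private lemma lt_of_sq_lt_sq (aa bb : ℝ) (h : bb^2 < aa^2) (hb : 0 ≤ bb) (ha : 0 < aa) :
    bb < aa := by nlinarith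

set_option maxHeartbeats 2000000 in
theorem F_second_deriv_neg
    (r ℓ : ℝ) (hr : r ∈ Set.Ico (1 - 1 / Real.sqrt 3) (1 / 2))
    (hℓ : ℓ = 2 * Real.arctan (Real.sqrt (4 * (1 - r) ^ 2 - 1)))
    (a b F : ℝ → ℝ)
    (ha : ∀ h, a h = 2 * Real.arcsin ((1 - r) * Real.sin h))
    (hb : ∀ h, b h = h + (ℓ - a h) / 2)
    (hF : ∀ h, F h = (1 - r) ^ 2 * Real.sin h * Real.cos h +
        (a h - Real.sin (a h)) / 2 +
        (1 - r) * (Real.cos (a h / 2) - (1 - r) * Real.cos h) * Real.sin (h + ℓ) +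
        b h - Real.sin (b h)) :
    (∀ h ∈ Set.Ioc 0 ℓ, deriv (deriv F) h < 0) ∧
    StrictConcaveOn ℝ (Set.Icc 0 ℓ) F := by
  obtain ⟨hr1, hr2⟩ := hr
  have h3 : (0:ℝ) < Real.sqrt 3 := by positivity
  have h3sq : Real.sqrt 3 ^ 2 = 3 := Real.sq_sqrt (by norm_num)
  set k : ℝ := 1 - r with hkdef
  have hk1 : 1/2 < k := by simp only [hkdef]; linarith
  have hk2 : k ≤ 1 / Real.sqrt 3 := by simp only [hkdef]; linarith
  have hk0 : 0 < k := by linarith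
  have hksq : k ^ 2 ≤ 1/3 := by
    have h13 : (1 / Real.sqrt 3) ^ 2 = 1/3 := by rw [div_pow, one_pow, h3sq]
    nlinarith
  have hksq1 : 1/4 < k ^ 2 := by nlinarith
  -- ℓ facts
  set q : ℝ := Real.sqrt (4 * k ^ 2 - 1) with hqdef
  have hq2 : q ^ 2 = 4 * k ^ 2 - 1 := Real.sq_sqrt (by nlinarith)
  have hq0 : 0 ≤ q := Real.sqrt_nonneg _
  have hL2 : ℓ / 2 = Real.arctan q := by rw [hℓ]; ring
  have hcosL2 : Real.cos (ℓ / 2) = 1 / (2 * k) := by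
    rw [hL2, Real.cos_arctan, show 1 + q ^ 2 = (2 * k) ^ 2 by rw [hq2]; ring,
      Real.sqrt_sq (by linarith)]
  have hsinL2 : Real.sin (ℓ / 2) = q / (2 * k) := by
    rw [hL2, Real.sin_arctan, show 1 + q ^ 2 = (2 * k) ^ 2 by rw [hq2]; ring,
      Real.sqrt_sq (by linarith)]
  have hL0 : 0 ≤ ℓ := by
    rw [hℓ]
    have : Real.arctan 0 ≤ Real.arctan q := Real.arctan_strictMono.monotone hq0
    simp only [Real.arctan_zero] at this
    linarith
  have hLpi : ℓ ≤ π / 3 := by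
    have htan : Real.tan (π / 6) = 1 / Real.sqrt 3 := by
      rw [Real.tan_eq_sin_div_cos, Real.sin_pi_div_six, Real.cos_pi_div_six]
      field_simp
    have hq13 : q ≤ 1 / Real.sqrt 3 := by
      have h1 : q ≤ Real.sqrt (1/3) := by
        apply Real.sqrt_le_sqrt; nlinarith
      have h2 : Real.sqrt (1/3 : ℝ) = 1 / Real.sqrt 3 := by
        rw [show (1/3 : ℝ) = 3⁻¹ by norm_num, Real.sqrt_inv, one_div]
      linarith [h1, h2.le]
    have harc : Real.arctan q ≤ π / 6 := by
      have := Real.arctan_strictMono.monotone (htan ▸ hq13)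
      rwa [Real.arctan_tan (by linarith [Real.pi_pos]) (by linarith [Real.pi_pos])] at this
    rw [hℓ]; linarith
  have hpi3 : π / 3 < π / 2 := by linarith [Real.pi_pos]
  -- positivity of 1 - k^2 sin^2
  have hspos : ∀ h : ℝ, 0 < 1 - k ^ 2 * Real.sin h ^ 2 := by
    intro h
    nlinarith [Real.sin_sq_le_one h, mul_le_mul_of_nonneg_right hksq (sq_nonneg (Real.sin h)),
      sq_nonneg (Real.sin h)]
  -- explicit formula for F
  have hFeq : F = fun y => k ^ 2 * Real.sin y * Real.cos y +
      (2 * Real.arcsin (k * Real.sin y) - Real.sin (2 * Real.arcsin (k * Real.sin y))) / 2 +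
      k * (Real.cos (2 * Real.arcsin (k * Real.sin y) / 2) - k * Real.cos y) * Real.sin (y + ℓ) +
      (y + (ℓ - 2 * Real.arcsin (k * Real.sin y)) / 2) -
      Real.sin (y + (ℓ - 2 * Real.arcsin (k * Real.sin y)) / 2) := by
    funext y; rw [hF y, hb y, ha y]
  have hcosL : Real.cos ℓ = 2 * (1 / (2 * k)) ^ 2 - 1 := by
    rw [show ℓ = 2 * (ℓ / 2) by ring, Real.cos_two_mul, hcosL2]
  have hsinL : Real.sin ℓ = 2 * (q / (2 * k)) * (1 / (2 * k)) := by
    rw [show ℓ = 2 * (ℓ / 2) by ring, Real.sin_two_mul, hsinL2, hcosL2]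
  have hF1 : ∀ h : ℝ, HasDerivAt F
      (1 + 2 * k ^ 2 * (Real.cos h ^ 2 - Real.sin h ^ 2)
        - 2 * k * Real.cos h * Real.sqrt (1 - k ^ 2 * Real.sin h ^ 2)
        + 2 * k ^ 3 * Real.sin h ^ 2 * Real.cos h / Real.sqrt (1 - k ^ 2 * Real.sin h ^ 2)) h := by
    intro h
    have hs0 : 0 < Real.sqrt (1 - k ^ 2 * Real.sin h ^ 2) := Real.sqrt_pos.2 (hspos h)
    set σ := Real.sin h with hσ
    set c := Real.cos h with hc
    set s := Real.sqrt (1 - k ^ 2 * σ ^ 2) with hs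
    have hs2 : s ^ 2 = 1 - k ^ 2 * σ ^ 2 := Real.sq_sqrt (hspos h).le
    have hpyth : σ ^ 2 + c ^ 2 = 1 := Real.sin_sq_add_cos_sq h
    have hsig : σ ^ 2 ≤ 1 := Real.sin_sq_le_one h
    have hxsq : (k * σ) ^ 2 ≤ 1 / 3 := by nlinarith
    have hne1 : k * σ ≠ -1 := by intro hcon; rw [hcon] at hxsq; norm_num at hxsq
    have hne2 : k * σ ≠ 1 := by intro hcon; rw [hcon] at hxsq; norm_num at hxsq
    have hbnd1 : -1 ≤ k * σ := by nlinarith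
    have hbnd2 : k * σ ≤ 1 := by nlinarith
    have dsin : HasDerivAt Real.sin c h := Real.hasDerivAt_sin h
    have dcos : HasDerivAt Real.cos (-σ) h := Real.hasDerivAt_cos h
    have dinner : HasDerivAt (fun y => k * Real.sin y) (k * c) h := dsin.const_mul k
    have hsquash : Real.sqrt (1 - (k * σ) ^ 2) = s := by rw [hs]; congr 1; ring
    have darc : HasDerivAt (fun y => Real.arcsin (k * Real.sin y)) (1 / s * (k * c)) h := by
      have h0 := (Real.hasDerivAt_arcsin hne1 hne2).comp h dinner
      rw [hsquash] at h0
      exact h0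
    have da : HasDerivAt (fun y => 2 * Real.arcsin (k * Real.sin y)) (2 * (1 / s * (k * c))) h :=
      darc.const_mul 2
    have T1 : HasDerivAt (fun y => k ^ 2 * Real.sin y * Real.cos y)
        (k ^ 2 * c * c + k ^ 2 * σ * (-σ)) h := (dsin.const_mul (k ^ 2)).mul dcos
    have T2 := (da.sub da.sin).div_const 2
    have T3a := (da.div_const 2).cos
    have T3b := (T3a.sub (dcos.const_mul k)).const_mul k
    have dshl : HasDerivAt (fun y => Real.sin (y + ℓ)) (Real.cos (h + ℓ)) h := by
      simpa using ((hasDerivAt_id h).add_const ℓ).sin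
    have T3 := T3b.mul dshl
    have T4 := (hasDerivAt_id' (x := h)).add (((hasDerivAt_const h ℓ).sub da).div_const 2)
    have T5 := T4.sin
    have TT := ((((T1.add T2).add T3).add T4).sub T5)
    rw [hFeq]
    convert TT using 1
    case e'_4 => rfl
    case e'_5 => rfl
    case e'_8 => rfl
    simp only [Pi.add_apply, Pi.sub_apply, Pi.mul_apply, Pi.div_apply, Pi.pow_apply]
    rw [show (2:ℝ) * Real.arcsin (k * σ) / 2 = Real.arcsin (k * σ) by ring]
    rw [Real.sin_arcsin hbnd1 hbnd2, Real.cos_two_mul, Real.cos_arcsin, hsquash]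
    rw [show h + (ℓ - 2 * Real.arcsin (k * σ)) / 2 = (h + ℓ / 2) - Real.arcsin (k * σ) by ring]
    rw [Real.cos_sub (h + ℓ / 2) (Real.arcsin (k * σ)), Real.cos_add h (ℓ / 2),
      Real.sin_add h (ℓ / 2), Real.sin_arcsin hbnd1 hbnd2, Real.cos_arcsin, hsquash,
      hcosL2, hsinL2]
    rw [Real.sin_add h ℓ, Real.cos_add h ℓ, hcosL, hsinL, ← hσ, ← hc]
    field_simp
    linear_combination (4*k^2*c) * hs2
  have hF2 : ∀ h : ℝ, HasDerivAt (fun y : ℝ =>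
      1 + 2 * k ^ 2 * (Real.cos y ^ 2 - Real.sin y ^ 2)
        - 2 * k * Real.cos y * Real.sqrt (1 - k ^ 2 * Real.sin y ^ 2)
        + 2 * k ^ 3 * Real.sin y ^ 2 * Real.cos y / Real.sqrt (1 - k ^ 2 * Real.sin y ^ 2))
      (-(8 * k ^ 2 * Real.sin h * Real.cos h) + 2 * k * Real.sin h * Real.sqrt (1 - k ^ 2 * Real.sin h ^ 2)
        + 2 * k ^ 3 * Real.sin h * Real.cos h ^ 2 / Real.sqrt (1 - k ^ 2 * Real.sin h ^ 2)
        + 2 * k ^ 3 * (2 * Real.sin h * Real.cos h ^ 2 - Real.sin h ^ 3) / Real.sqrt (1 - k ^ 2 * Real.sin h ^ 2)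
        + 2 * k ^ 5 * Real.sin h ^ 3 * Real.cos h ^ 2 / Real.sqrt (1 - k ^ 2 * Real.sin h ^ 2) ^ 3) h := by
    intro h
    have hs0 : 0 < Real.sqrt (1 - k ^ 2 * Real.sin h ^ 2) := Real.sqrt_pos.2 (hspos h)
    set σ := Real.sin h with hσ
    set c := Real.cos h with hc
    set s := Real.sqrt (1 - k ^ 2 * σ ^ 2) with hs
    have hs2 : s ^ 2 = 1 - k ^ 2 * σ ^ 2 := Real.sq_sqrt (hspos h).le
    have hpyth : σ ^ 2 + c ^ 2 = 1 := Real.sin_sq_add_cos_sq h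
    have dsin : HasDerivAt Real.sin c h := Real.hasDerivAt_sin h
    have dcos : HasDerivAt Real.cos (-σ) h := Real.hasDerivAt_cos h
    have dinner : HasDerivAt (fun y => 1 - k ^ 2 * Real.sin y ^ 2)
        (-(k ^ 2 * ((2 : ℕ) * Real.sin h ^ 1 * c))) h := ((dsin.pow 2).const_mul (k ^ 2)).const_sub 1
    have dsqrt : HasDerivAt (fun y => Real.sqrt (1 - k ^ 2 * Real.sin y ^ 2))
        (1 / (2 * s) * -(k ^ 2 * ((2 : ℕ) * Real.sin h ^ 1 * c))) h := by
      have h0 := (Real.hasDerivAt_sqrt (hspos h).ne').comp h dinner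
      exact h0
    have U2 := ((dcos.pow 2).sub (dsin.pow 2)).const_mul (2 * k ^ 2)
    have U3 := (dcos.const_mul (2 * k)).mul dsqrt
    have U4 := (((dsin.pow 2).const_mul (2 * k ^ 3)).mul dcos).div dsqrt hs0.ne'
    have UU := (((hasDerivAt_const h (1 : ℝ)).add U2).sub U3).add U4
    convert UU using 1
    case e'_4 => rfl
    case e'_5 => rfl
    case e'_8 => rfl
    simp only [Pi.add_apply, Pi.sub_apply, Pi.mul_apply, Pi.div_apply, Pi.pow_apply]
    rw [← hσ, ← hc, ← hs]
    push_cast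
    field_simp
    ring
  have hneg : ∀ h ∈ Set.Ioc 0 ℓ, deriv (deriv F) h < 0 := by
    intro h hmem
    obtain ⟨hh0, hhl⟩ := hmem
    have hderiv : deriv F = fun y : ℝ =>
        1 + 2 * k ^ 2 * (Real.cos y ^ 2 - Real.sin y ^ 2)
          - 2 * k * Real.cos y * Real.sqrt (1 - k ^ 2 * Real.sin y ^ 2)
          + 2 * k ^ 3 * Real.sin y ^ 2 * Real.cos y / Real.sqrt (1 - k ^ 2 * Real.sin y ^ 2) :=
      funext fun y => (hF1 y).deriv
    rw [hderiv, (hF2 h).deriv]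
    have hhpi : h ≤ π / 3 := le_trans hhl hLpi
    have hσ0 : 0 < Real.sin h := Real.sin_pos_of_pos_of_lt_pi hh0 (by linarith [Real.pi_pos])
    have hc12 : 1 / 2 ≤ Real.cos h := by
      have := Real.cos_le_cos_of_nonneg_of_le_pi hh0.le (by linarith [Real.pi_pos]) hhpi
      rwa [Real.cos_pi_div_three] at this
    have hs0 : 0 < Real.sqrt (1 - k ^ 2 * Real.sin h ^ 2) := Real.sqrt_pos.2 (hspos h)
    have hsp := hspos h
    set σ := Real.sin h with hσ
    set c := Real.cos h with hc
    set s := Real.sqrt (1 - k ^ 2 * σ ^ 2) with hs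
    have hs2 : s ^ 2 = 1 - k ^ 2 * σ ^ 2 := Real.sq_sqrt hsp.le
    have hpyth : σ ^ 2 + c ^ 2 = 1 := Real.sin_sq_add_cos_sq h
    have hc0 : 0 < c := by linarith
    have hu : σ ^ 2 ≤ 3 / 4 := by nlinarith
    have key := key_ineq (k ^ 2) (σ ^ 2) hksq1.le hksq (sq_nonneg σ) hu
    have hR0 := R_nonneg (k ^ 2) (σ ^ 2) hksq1.le hksq (sq_nonneg σ) hu
    have hLHS : (4 * k * c * (1 - k ^ 2 * σ ^ 2) * s) ^ 2
        = 16 * k ^ 2 * (1 - σ ^ 2) * (1 - k ^ 2 * σ ^ 2) ^ 3 := by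
      linear_combination (16 * k ^ 2 * (1 - k ^ 2 * σ ^ 2) ^ 2 * c ^ 2) * hs2 +
        (16 * k ^ 2 * (1 - k ^ 2 * σ ^ 2) ^ 3) * hpyth
    have hL0' : 0 < 4 * k * c * (1 - k ^ 2 * σ ^ 2) * s :=
      mul_pos (mul_pos (mul_pos (by linarith) hc0) hsp) hs0
    rw [← hLHS] at key
    have hRL := lt_of_sq_lt_sq _ _ key hR0 hL0'
    have hfactor : -(8 * k ^ 2 * σ * c) + 2 * k * σ * s + 2 * k ^ 3 * σ * c ^ 2 / s
        + 2 * k ^ 3 * (2 * σ * c ^ 2 - σ ^ 3) / s + 2 * k ^ 5 * σ ^ 3 * c ^ 2 / s ^ 3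
        = (2 * k * σ / s ^ 3) * (((k ^ 2) ^ 2 * σ ^ 2 * (1 - σ ^ 2) +
            (1 + 3 * k ^ 2 - 5 * k ^ 2 * σ ^ 2) * (1 - k ^ 2 * σ ^ 2))
            - 4 * k * c * (1 - k ^ 2 * σ ^ 2) * s) := by
      field_simp
      linear_combination (-8*k*c*s + 2*(s^2 + (1 - k^2*σ^2)) + 6*k^2*c^2 - 2*k^2*σ^2) * hs2 + (6*k^2*(1 - k^2*σ^2) + 2*k^4*σ^2) * hpyth
    rw [hfactor]
    exact mul_neg_of_pos_of_neg
      (div_pos (mul_pos (mul_pos two_pos hk0) hσ0) (pow_pos hs0 3)) (by linarith)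
  refine ⟨hneg, ?_⟩
  apply strictConcaveOn_of_deriv2_neg (convex_Icc 0 ℓ)
  · exact fun x _ => (hF1 x).differentiableAt.continuousAt.continuousWithinAt
  · intro x hx
    rw [interior_Icc] at hx
    exact hneg x ⟨hx.1, hx.2.le⟩
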